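/- Let ν, ν̃ ∈ ℓ¹(ℕ), Λ, Λ̃ ∈ ℓ¹(ℕ×ℕ), and a sequence ((n_k,m_k))_{k≥1} in ℕ×ℕ. Define Λ^{(k)} := Φ^ν_{n_k,m_k}(Λ^{(k−1)}) with Λ^{(0)} = Λ, and similarly Λ̃^{(k)} with ν̃, Λ̃. Set ε := ‖Λ − Λ̃‖₁ + ‖ν − ν̃‖₁. Then for all k: ‖Λ^{(k)} − Λ̃^{(k)}‖₁ + ‖ν − ν̃‖₁ ≤ 3^k ε. -/

import Mathlib

open scoped BigOperators
open Filter
set_option maxHeartbeats 1000000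

/-- A set `R ⊆ ℕ` is upward closed w.r.t. the relation `r`. -/
def UpClosed (r : ℕ → ℕ → Prop) (R : Set ℕ) : Prop :=
  ∀ x ∈ R, ∀ y, r x y → y ∈ R

/-- The family `𝓡_{n,m}` of upward closed sets containing `m` but not `n`. -/
def Rfam (r : ℕ → ℕ → Prop) (n m : ℕ) : Set (Set ℕ) :=
  {R | UpClosed r R ∧ n ∉ R ∧ m ∈ R}

/-- The `l`-th column sum `λ_{*,l}` of a matrix. -/
noncomputable def colSum (Λ : ℕ × ℕ → ℝ) (l : ℕ) : ℝ := ∑' k, Λ (k, l)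

/-- Sum of a sequence over a subset of `ℕ`. -/
noncomputable def setSum (f : ℕ → ℝ) (R : Set ℕ) : ℝ := ∑' l : R, f l

/-- `inf_{R ∈ 𝓡_{n,m}} ∑_{l∈R} (ν_l − λ_{*,l})`. -/
noncomputable def infR (r : ℕ → ℕ → Prop) (ν : ℕ → ℝ) (Λ : ℕ × ℕ → ℝ) (n m : ℕ) : ℝ :=
  sInf ((fun R => setSum (fun l => ν l - colSum Λ l) R) '' Rfam r n m)

open Classical in
/-- The correction term of Nawrotzki's algorithm. -/
noncomputable def alpha (r : ℕ → ℕ → Prop) (ν : ℕ → ℝ) (n m : ℕ) (Λ : ℕ × ℕ → ℝ) : ℝ :=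
  if r n m then
    (if 0 < min (colSum Λ n - ν n) (min (ν m - colSum Λ m) (infR r ν Λ n m))
      then min (colSum Λ n - ν n) (min (ν m - colSum Λ m) (infR r ν Λ n m)) else 0)
  else 0

/-- The Nawrotzki update map `Φ^ν_{n,m}`. -/
noncomputable def Phi (r : ℕ → ℕ → Prop) (ν : ℕ → ℝ) (n m : ℕ) (Λ : ℕ × ℕ → ℝ) :
    ℕ × ℕ → ℝ :=
  fun p => if p = (n, n) then Λ p - alpha r ν n m Λ
    else if p = (n, m) then Λ p + alpha r ν n m Λ
    else Λ p

/-- The set `S(Λ)` of pairs where the correction term is positive. -/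
def Sset (r : ℕ → ℕ → Prop) (ν : ℕ → ℝ) (Λ : ℕ × ℕ → ℝ) : Set (ℕ × ℕ) :=
  {p | 0 < alpha r ν p.1 p.2 Λ}

/-- The diagonal matrix built from a sequence. -/
noncomputable def diagMat (μ : ℕ → ℝ) : ℕ × ℕ → ℝ :=
  fun p => if p.1 = p.2 then μ p.1 else 0



private lemma col_inj (l : ℕ) : Function.Injective (fun k : ℕ => (k, l)) := by
  intro a b h; simpa using congrArg Prod.fst h

private lemma col_abs_summable {Λ : ℕ × ℕ → ℝ} (hΛ : Summable fun p => |Λ p|) (l : ℕ) :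
    Summable fun k => |Λ (k, l)| :=
  hΛ.comp_injective (col_inj l)

private lemma col_summable {Λ : ℕ × ℕ → ℝ} (hΛ : Summable fun p => |Λ p|) (l : ℕ) :
    Summable fun k => Λ (k, l) :=
  summable_abs_iff.mp (col_abs_summable hΛ l)

private lemma colabs_summable {Λ : ℕ × ℕ → ℝ} (hΛ : Summable fun p => |Λ p|) :
    Summable fun l => ∑' k, |Λ (k, l)| := by
  have hg : Summable fun q : ℕ × ℕ => |Λ (q.2, q.1)| :=
    ((Equiv.prodComm ℕ ℕ).summable_iff).mpr hΛ
  exact ((summable_prod_of_nonneg (fun q => abs_nonneg _)).mp hg).2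

private lemma double_sum_eq {D : ℕ × ℕ → ℝ} (hD : Summable fun p => |D p|) :
    ∑' l, ∑' k, |D (k, l)| = ∑' p, |D p| := by
  have hg : Summable fun q : ℕ × ℕ => |D (q.2, q.1)| :=
    ((Equiv.prodComm ℕ ℕ).summable_iff).mpr hD
  have h1 : ∑' (q : ℕ × ℕ), |D (q.2, q.1)| = ∑' l, ∑' k, |D (k, l)| :=
    Summable.tsum_prod' hg (fun l => col_abs_summable hD l)
  rw [← h1]
  exact (Equiv.prodComm ℕ ℕ).tsum_eq (fun p => |D p|)

private lemma diff_abs_summable {ι : Type*} {f g : ι → ℝ} (hf : Summable fun i => |f i|)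
    (hg : Summable fun i => |g i|) : Summable fun i => |f i - g i| :=
  Summable.of_nonneg_of_le (fun i => abs_nonneg _) (fun i => abs_sub _ _) (hf.add hg)

private lemma colSum_diff_le {Λ Λ' : ℕ × ℕ → ℝ} (hΛ : Summable fun p => |Λ p|)
    (hΛ' : Summable fun p => |Λ' p|) (l : ℕ) :
    |colSum Λ l - colSum Λ' l| ≤ ∑' k, |Λ (k, l) - Λ' (k, l)| := by
  rw [colSum, colSum, ← Summable.tsum_sub (col_summable hΛ l) (col_summable hΛ' l)]
  simpa [Real.norm_eq_abs] using
    norm_tsum_le_tsum_norm (f := fun k => Λ (k, l) - Λ' (k, l))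
      (col_abs_summable (Λ := fun p => Λ p - Λ' p) (diff_abs_summable hΛ hΛ') l)

private lemma colSum_diff_le' {Λ Λ' : ℕ × ℕ → ℝ} (hΛ : Summable fun p => |Λ p|)
    (hΛ' : Summable fun p => |Λ' p|) (l : ℕ) :
    |colSum Λ l - colSum Λ' l| ≤ ∑' p, |Λ p - Λ' p| := by
  refine (colSum_diff_le hΛ hΛ' l).trans ?_
  exact Summable.tsum_le_tsum_of_inj (fun k => (k, l)) (col_inj l) (fun c _ => abs_nonneg _)
    (fun k => le_rfl) (col_abs_summable (Λ := fun p => Λ p - Λ' p) (diff_abs_summable hΛ hΛ') l)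
    (diff_abs_summable hΛ hΛ')

private lemma sum_colSum_diff_le {Λ Λ' : ℕ × ℕ → ℝ} (hΛ : Summable fun p => |Λ p|)
    (hΛ' : Summable fun p => |Λ' p|) :
    ∑' l, |colSum Λ l - colSum Λ' l| ≤ ∑' p, |Λ p - Λ' p| := by
  have hD := diff_abs_summable hΛ hΛ'
  have hcs : Summable fun l => |colSum Λ l - colSum Λ' l| :=
    Summable.of_nonneg_of_le (f := fun l => ∑' k, |Λ (k, l) - Λ' (k, l)|)
      (g := fun l => |colSum Λ l - colSum Λ' l|)
      (fun l => abs_nonneg _) (colSum_diff_le hΛ hΛ') (colabs_summable (Λ := fun p => Λ p - Λ' p) hD)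
  have h1 : ∑' l, |colSum Λ l - colSum Λ' l| ≤ ∑' l, ∑' k, |Λ (k, l) - Λ' (k, l)| :=
    Summable.tsum_le_tsum (colSum_diff_le hΛ hΛ') hcs (colabs_summable (Λ := fun p => Λ p - Λ' p) hD)
  exact h1.trans_eq (double_sum_eq (D := fun p => Λ p - Λ' p) hD)

private lemma summable_colSum_diff_abs {Λ Λ' : ℕ × ℕ → ℝ} (hΛ : Summable fun p => |Λ p|)
    (hΛ' : Summable fun p => |Λ' p|) :
    Summable fun l => |colSum Λ l - colSum Λ' l| :=
  Summable.of_nonneg_of_le (f := fun l => ∑' k, |Λ (k, l) - Λ' (k, l)|)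
    (g := fun l => |colSum Λ l - colSum Λ' l|)
    (fun l => abs_nonneg _) (colSum_diff_le hΛ hΛ')
    (colabs_summable (Λ := fun p => Λ p - Λ' p) (diff_abs_summable hΛ hΛ'))

/-- Summability of `l ↦ |ν l - colSum Λ l|`. -/
private lemma fR_abs_summable {ν : ℕ → ℝ} {Λ : ℕ × ℕ → ℝ} (hν : Summable fun n => |ν n|)
    (hΛ : Summable fun p => |Λ p|) :
    Summable fun l => |ν l - colSum Λ l| := by
  have hb : ∀ l, |ν l - colSum Λ l| ≤ |ν l| + ∑' k, |Λ (k, l)| := by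
    intro l
    have h1 : |colSum Λ l| ≤ ∑' k, |Λ (k, l)| := by
      simpa [Real.norm_eq_abs, colSum] using
        norm_tsum_le_tsum_norm (f := fun k => Λ (k, l)) (col_abs_summable hΛ l)
    have h2 := abs_sub (ν l) (colSum Λ l)
    linarith
  exact Summable.of_nonneg_of_le (fun l => abs_nonneg _) hb (hν.add (colabs_summable hΛ))

private lemma setSum_abs_le {f : ℕ → ℝ} (hf : Summable fun l => |f l|) (R : Set ℕ) :
    |setSum f R| ≤ ∑' l, |f l| := by
  have h1 : |setSum f R| ≤ ∑' l : R, |f l| := by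
    simpa [Real.norm_eq_abs, setSum] using
      norm_tsum_le_tsum_norm (f := fun l : R => f l) (hf.subtype R)
  exact h1.trans (Summable.tsum_subtype_le _ R (fun l => abs_nonneg _) hf)

private lemma setSum_diff_le {f f' : ℕ → ℝ} (hf : Summable fun l => |f l|)
    (hf' : Summable fun l => |f' l|) (R : Set ℕ) :
    |setSum f R - setSum f' R| ≤ ∑' l, |f l - f' l| := by
  have hd := diff_abs_summable hf hf'
  have h0 : setSum f R - setSum f' R = setSum (fun l => f l - f' l) R := by
    simp only [setSum]
    exact (Summable.tsum_sub ((summable_abs_iff.mp hf).subtype R)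
      ((summable_abs_iff.mp hf').subtype R)).symm
  rw [h0]
  exact setSum_abs_le hd R


private lemma sInf_image_diff_le {F F' : Set ℕ → ℝ} {S : Set (Set ℕ)} {c c' ε : ℝ}
    (hε : 0 ≤ ε) (hb : ∀ R ∈ S, c ≤ F R) (hb' : ∀ R ∈ S, c' ≤ F' R)
    (h : ∀ R ∈ S, |F R - F' R| ≤ ε) :
    |sInf (F '' S) - sInf (F' '' S)| ≤ ε := by
  rcases S.eq_empty_or_nonempty with hS | hS
  · simp [hS, Real.sInf_empty, hε]
  · have hbdd : BddBelow (F '' S) := ⟨c, by rintro x ⟨R, hR, rfl⟩; exact hb R hR⟩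
    have hbdd' : BddBelow (F' '' S) := ⟨c', by rintro x ⟨R, hR, rfl⟩; exact hb' R hR⟩
    have hne : (F '' S).Nonempty := hS.image F
    have hne' : (F' '' S).Nonempty := hS.image F'
    rw [abs_sub_le_iff]
    constructor
    · have h3 : sInf (F '' S) - ε ≤ sInf (F' '' S) := by
        apply le_csInf hne'
        rintro x ⟨R, hR, rfl⟩
        have h1 := csInf_le hbdd ⟨R, hR, rfl⟩
        have h2 := (abs_sub_le_iff.mp (h R hR)).1
        linarith
      linarith
    · have h3 : sInf (F' '' S) - ε ≤ sInf (F '' S) := by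
        apply le_csInf hne
        rintro x ⟨R, hR, rfl⟩
        have h1 := csInf_le hbdd' ⟨R, hR, rfl⟩
        have h2 := (abs_sub_le_iff.mp (h R hR)).2
        linarith
      linarith

private lemma fR_diff_tsum_le {ν ν' : ℕ → ℝ} (hν : Summable fun n => |ν n|)
    (hν' : Summable fun n => |ν' n|) {Λ Λ' : ℕ × ℕ → ℝ} (hΛ : Summable fun p => |Λ p|)
    (hΛ' : Summable fun p => |Λ' p|) :
    ∑' l, |(ν l - colSum Λ l) - (ν' l - colSum Λ' l)|
      ≤ (∑' p, |Λ p - Λ' p|) + ∑' l, |ν l - ν' l| := by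
  have hrhs : Summable fun l => |ν l - ν' l| + |colSum Λ l - colSum Λ' l| :=
    (diff_abs_summable hν hν').add (summable_colSum_diff_abs hΛ hΛ')
  have hpt : ∀ l, |(ν l - colSum Λ l) - (ν' l - colSum Λ' l)|
      ≤ |ν l - ν' l| + |colSum Λ l - colSum Λ' l| := by
    intro l
    have e : (ν l - colSum Λ l) - (ν' l - colSum Λ' l)
        = (ν l - ν' l) - (colSum Λ l - colSum Λ' l) := by ring
    rw [e]
    exact abs_sub _ _
  have hlhs : Summable fun l => |(ν l - colSum Λ l) - (ν' l - colSum Λ' l)| :=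
    Summable.of_nonneg_of_le (fun l => abs_nonneg _) hpt hrhs
  calc ∑' l, |(ν l - colSum Λ l) - (ν' l - colSum Λ' l)|
      ≤ ∑' l, (|ν l - ν' l| + |colSum Λ l - colSum Λ' l|) := Summable.tsum_le_tsum hpt hlhs hrhs
    _ = (∑' l, |ν l - ν' l|) + ∑' l, |colSum Λ l - colSum Λ' l| :=
        Summable.tsum_add (diff_abs_summable hν hν') (summable_colSum_diff_abs hΛ hΛ')
    _ ≤ (∑' l, |ν l - ν' l|) + ∑' p, |Λ p - Λ' p| := by
        have := sum_colSum_diff_le hΛ hΛ'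
        linarith
    _ = _ := by ring

private lemma infR_diff_le (r : ℕ → ℕ → Prop) {ν ν' : ℕ → ℝ} (hν : Summable fun n => |ν n|)
    (hν' : Summable fun n => |ν' n|) {Λ Λ' : ℕ × ℕ → ℝ} (hΛ : Summable fun p => |Λ p|)
    (hΛ' : Summable fun p => |Λ' p|) (n m : ℕ) :
    |infR r ν Λ n m - infR r ν' Λ' n m|
      ≤ (∑' p, |Λ p - Λ' p|) + ∑' l, |ν l - ν' l| := by
  have hf := fR_abs_summable hν hΛ
  have hf' := fR_abs_summable hν' hΛ'
  have hε : (0:ℝ) ≤ (∑' p, |Λ p - Λ' p|) + ∑' l, |ν l - ν' l| :=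
    add_nonneg (tsum_nonneg fun _ => abs_nonneg _) (tsum_nonneg fun _ => abs_nonneg _)
  refine sInf_image_diff_le (c := -(∑' l, |ν l - colSum Λ l|))
    (c' := -(∑' l, |ν' l - colSum Λ' l|)) hε ?_ ?_ ?_
  · intro R _
    have := setSum_abs_le hf R
    have := neg_abs_le (setSum (fun l => ν l - colSum Λ l) R)
    linarith
  · intro R _
    have := setSum_abs_le hf' R
    have := neg_abs_le (setSum (fun l => ν' l - colSum Λ' l) R)
    linarith
  · intro R _
    refine (setSum_diff_le hf hf' R).trans ?_
    exact fR_diff_tsum_le hν hν' hΛ hΛ'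

private lemma alpha_diff_le (r : ℕ → ℕ → Prop) {ν ν' : ℕ → ℝ} (hν : Summable fun n => |ν n|)
    (hν' : Summable fun n => |ν' n|) {Λ Λ' : ℕ × ℕ → ℝ} (hΛ : Summable fun p => |Λ p|)
    (hΛ' : Summable fun p => |Λ' p|) (n m : ℕ) :
    |alpha r ν n m Λ - alpha r ν' n m Λ'|
      ≤ (∑' p, |Λ p - Λ' p|) + ∑' l, |ν l - ν' l| := by
  have hε : (0:ℝ) ≤ (∑' p, |Λ p - Λ' p|) + ∑' l, |ν l - ν' l| :=
    add_nonneg (tsum_nonneg fun _ => abs_nonneg _) (tsum_nonneg fun _ => abs_nonneg _)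
  by_cases h : r n m
  · have hA : |(colSum Λ n - ν n) - (colSum Λ' n - ν' n)|
        ≤ (∑' p, |Λ p - Λ' p|) + ∑' l, |ν l - ν' l| := by
      have e : (colSum Λ n - ν n) - (colSum Λ' n - ν' n)
          = (colSum Λ n - colSum Λ' n) - (ν n - ν' n) := by ring
      rw [e]
      have h1 := colSum_diff_le' hΛ hΛ' n
      have h2 : |ν n - ν' n| ≤ ∑' l, |ν l - ν' l| :=
        Summable.le_tsum (diff_abs_summable hν hν') n (fun j _ => abs_nonneg _)
      have h3 := abs_sub (colSum Λ n - colSum Λ' n) (ν n - ν' n)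
      linarith
    have hB : |(ν m - colSum Λ m) - (ν' m - colSum Λ' m)|
        ≤ (∑' p, |Λ p - Λ' p|) + ∑' l, |ν l - ν' l| := by
      have e : (ν m - colSum Λ m) - (ν' m - colSum Λ' m)
          = (ν m - ν' m) - (colSum Λ m - colSum Λ' m) := by ring
      rw [e]
      have h1 := colSum_diff_le' hΛ hΛ' m
      have h2 : |ν m - ν' m| ≤ ∑' l, |ν l - ν' l| :=
        Summable.le_tsum (diff_abs_summable hν hν') m (fun j _ => abs_nonneg _)
      have h3 := abs_sub (ν m - ν' m) (colSum Λ m - colSum Λ' m)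
      linarith
    have hC := infR_diff_le r hν hν' hΛ hΛ' n m
    set t := min (colSum Λ n - ν n) (min (ν m - colSum Λ m) (infR r ν Λ n m)) with ht
    set t' := min (colSum Λ' n - ν' n) (min (ν' m - colSum Λ' m) (infR r ν' Λ' n m)) with ht'
    have e1 : alpha r ν n m Λ = max t 0 := by
      rw [alpha, if_pos h]
      split_ifs with h1
      · exact (max_eq_left h1.le).symm
      · exact (max_eq_right (not_lt.mp h1)).symm
    have e2 : alpha r ν' n m Λ' = max t' 0 := by
      rw [alpha, if_pos h]
      split_ifs with h1
      · exact (max_eq_left h1.le).symm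
      · exact (max_eq_right (not_lt.mp h1)).symm
    rw [e1, e2]
    have h4 : |t - t'| ≤ (∑' p, |Λ p - Λ' p|) + ∑' l, |ν l - ν' l| := by
      refine (abs_min_sub_min_le_max _ _ _ _).trans (max_le hA ?_)
      exact (abs_min_sub_min_le_max _ _ _ _).trans (max_le hB hC)
    exact (abs_max_sub_max_le_abs t t' 0).trans h4
  · simp [alpha, h, hε]

private lemma indicator_summable (q : ℕ × ℕ) (c : ℝ) :
    Summable fun p : ℕ × ℕ => if p = q then c else 0 :=
  summable_of_ne_finset_zero (s := {q}) (fun p hp => if_neg (by simpa using hp))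

private lemma phi_summable (r : ℕ → ℕ → Prop) (ν : ℕ → ℝ) {Λ : ℕ × ℕ → ℝ}
    (hΛ : Summable fun p => |Λ p|) (n m : ℕ) :
    Summable fun p => |Phi r ν n m Λ p| := by
  set a := alpha r ν n m Λ with ha
  refine Summable.of_nonneg_of_le (fun p => abs_nonneg _) (fun p => ?_)
    ((hΛ.add (indicator_summable (n, n) |a|)).add (indicator_summable (n, m) |a|))
  simp only [Phi]
  split_ifs with h1 h2 <;>
    [ (have := abs_sub (Λ p) a; linarith [abs_nonneg a]);
      (have := abs_sub (Λ p) a; linarith);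
      (have := abs_add_le (Λ p) a; linarith);
      linarith [abs_nonneg (Λ p)] ]

private lemma phi_diff_tsum_le (r : ℕ → ℕ → Prop) (ν ν' : ℕ → ℝ) {Λ Λ' : ℕ × ℕ → ℝ}
    (hΛ : Summable fun p => |Λ p|) (hΛ' : Summable fun p => |Λ' p|) (n m : ℕ) :
    (∑' p, |Phi r ν n m Λ p - Phi r ν' n m Λ' p|)
      ≤ (∑' p, |Λ p - Λ' p|) + 2 * |alpha r ν n m Λ - alpha r ν' n m Λ'| := by
  set a := alpha r ν n m Λ with ha
  set a' := alpha r ν' n m Λ' with ha'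
  have hD := diff_abs_summable hΛ hΛ'
  set g : ℕ × ℕ → ℝ := fun p => (if p = ((n, n) : ℕ × ℕ) then |a - a'| else 0)
      + (if p = ((n, m) : ℕ × ℕ) then |a - a'| else 0) with hg
  have hgs : Summable g := (indicator_summable _ _).add (indicator_summable _ _)
  have hpt : ∀ p, |Phi r ν n m Λ p - Phi r ν' n m Λ' p| ≤ |Λ p - Λ' p| + g p := by
    intro p
    simp only [Phi, hg]
    split_ifs with h1 h2
    · have e : (Λ p - a) - (Λ' p - a') = (Λ p - Λ' p) - (a - a') := by ring
      rw [e]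
      have h3 := abs_sub (Λ p - Λ' p) (a - a')
      linarith [abs_nonneg (a - a')]
    · have e : (Λ p - a) - (Λ' p - a') = (Λ p - Λ' p) - (a - a') := by ring
      rw [e]
      have h3 := abs_sub (Λ p - Λ' p) (a - a')
      linarith
    · have e : (Λ p + a) - (Λ' p + a') = (Λ p - Λ' p) + (a - a') := by ring
      rw [e]
      have h3 := abs_add_le (Λ p - Λ' p) (a - a')
      linarith
    · simp
  have hlhs : Summable fun p => |Phi r ν n m Λ p - Phi r ν' n m Λ' p| :=
    Summable.of_nonneg_of_le (fun p => abs_nonneg _) hpt (hD.add hgs)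
  have hgsum : ∑' p, g p = 2 * |a - a'| := by
    rw [hg, Summable.tsum_add (indicator_summable _ _) (indicator_summable _ _),
      tsum_ite_eq ((n, n) : ℕ × ℕ) (fun _ => |a - a'|), tsum_ite_eq ((n, m) : ℕ × ℕ) (fun _ => |a - a'|)]
    ring
  calc ∑' p, |Phi r ν n m Λ p - Phi r ν' n m Λ' p|
      ≤ ∑' p, (|Λ p - Λ' p| + g p) := Summable.tsum_le_tsum hpt hlhs (hD.add hgs)
    _ = (∑' p, |Λ p - Λ' p|) + ∑' p, g p := Summable.tsum_add hD hgs
    _ = _ := by rw [hgsum]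

theorem iterates_perturbation (r : ℕ → ℕ → Prop)
    (ν ν' : ℕ → ℝ) (hν : Summable fun n => |ν n|) (hν' : Summable fun n => |ν' n|)
    (Λ Λ' : ℕ × ℕ → ℝ) (hΛ : Summable fun p => |Λ p|) (hΛ' : Summable fun p => |Λ' p|)
    (nm : ℕ → ℕ × ℕ)
    (Ls Ls' : ℕ → ℕ × ℕ → ℝ)
    (h0 : Ls 0 = Λ) (h0' : Ls' 0 = Λ')
    (hrec : ∀ k, Ls (k + 1) = Phi r ν (nm k).1 (nm k).2 (Ls k))
    (hrec' : ∀ k, Ls' (k + 1) = Phi r ν' (nm k).1 (nm k).2 (Ls' k)) :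
    ∀ k, (∑' p, |Ls k p - Ls' k p|) + (∑' l, |ν l - ν' l|) ≤
      3 ^ k * ((∑' p, |Λ p - Λ' p|) + ∑' l, |ν l - ν' l|) := by
  have hεν : (0:ℝ) ≤ ∑' l, |ν l - ν' l| := tsum_nonneg fun _ => abs_nonneg _
  have key : ∀ k, (Summable fun p => |Ls k p|) ∧ (Summable fun p => |Ls' k p|) ∧
      (∑' p, |Ls k p - Ls' k p|) + (∑' l, |ν l - ν' l|) ≤
        3 ^ k * ((∑' p, |Λ p - Λ' p|) + ∑' l, |ν l - ν' l|) := by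
    intro k
    induction k with
    | zero =>
      rw [h0, h0']
      exact ⟨hΛ, hΛ', by norm_num⟩
    | succ k ih =>
      obtain ⟨hs, hs', hle⟩ := ih
      rw [hrec, hrec']
      refine ⟨phi_summable r ν hs (nm k).1 (nm k).2, phi_summable r ν' hs' (nm k).1 (nm k).2, ?_⟩
      have h1 := phi_diff_tsum_le r ν ν' hs hs' (nm k).1 (nm k).2
      have h2 := alpha_diff_le r hν hν' hs hs' (nm k).1 (nm k).2
      have h3 : |alpha r ν (nm k).1 (nm k).2 (Ls k) - alpha r ν' (nm k).1 (nm k).2 (Ls' k)|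
          ≥ 0 := abs_nonneg _
      have hd : (0:ℝ) ≤ ∑' p, |Ls k p - Ls' k p| := tsum_nonneg fun _ => abs_nonneg _
      have hpow : (3:ℝ) ^ (k + 1) = 3 * 3 ^ k := by ring
      rw [hpow]
      nlinarith [hle]
  intro k
  exact (key k).2.2
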